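/- If (X_t) is a Markov chain with kernel P on Θ and stationary measure μ_Θ, θ := inf{t : X_t ∈ A} is the hitting time of a set A, and t₁, t₂ ∈ ℕ satisfy Pr_x[θ ≥ t₂] ≤ 1/8 for all starting points x ∈ Θ and sup_{y ∈ A} ‖δ_y P^{t₁} − μ_Θ‖_TV ≤ 1/8, then sup_{x ∈ Θ} ‖δ_x P^{t₁+t₂} − μ_Θ‖_TV ≤ 1/4. -/

import Mathlib

open MeasureTheory ProbabilityTheory
open scoped ENNReal
set_option linter.unusedSectionVars false

/-- `kpow P t` is the `t`-step kernel `P^t`. -/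
noncomputable def kpow {X : Type*} [MeasurableSpace X] (P : Kernel X X) : ℕ → Kernel X X
  | 0 => Kernel.id
  | n + 1 => (kpow P n) ∘ₖ P

/-- Total variation distance between two measures. -/
noncomputable def tvDist {X : Type*} [MeasurableSpace X] (μ ν : Measure X) : ℝ :=
  ⨆ A : {A : Set X // MeasurableSet A}, |(μ A.1).toReal - (ν A.1).toReal|

/-- The σ-algebra on trajectory space generated by the first `n+1` coordinates. -/
def pastMS (X : Type*) [MeasurableSpace X] (n : ℕ) : MeasurableSpace (ℕ → X) :=
  MeasurableSpace.comap (fun ω => fun i : Fin (n + 1) => ω (i : ℕ)) inferInstance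

/-- `Pr` is the law of a Markov chain on trajectory space with transition kernel `P`. -/
structure IsMarkovChainWithKernel {X : Type*} [MeasurableSpace X] (P : Kernel X X)
    (Pr : Measure (ℕ → X)) : Prop where
  markov : ∀ (n : ℕ) (A : Set X), MeasurableSet A → ∀ B : Set (ℕ → X),
    MeasurableSet[pastMS X n] B →
    Pr ({ω | ω (n + 1) ∈ A} ∩ B) = ∫⁻ ω in B, P (ω n) A ∂Pr

section auxkernel
variable {Θ : Type*} [MeasurableSpace Θ] (P : Kernel Θ Θ) [IsMarkovKernel P]

instance kpow_markov : ∀ n, IsMarkovKernel (kpow P n)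
  | 0 => by rw [kpow]; infer_instance
  | n + 1 => by rw [kpow]; have := kpow_markov n; infer_instance

lemma kpow_succ' : ∀ n, kpow P (n + 1) = P ∘ₖ kpow P n
  | 0 => by
      show kpow P 0 ∘ₖ P = P ∘ₖ kpow P 0
      rw [show kpow P 0 = Kernel.id from rfl, Kernel.comp_id, Kernel.id_comp]
  | n + 1 => by
      show kpow P (n+1) ∘ₖ P = P ∘ₖ kpow P (n+1)
      conv_lhs => rw [kpow_succ' n]
      rw [Kernel.comp_assoc]
      rfl

lemma kpow_add : ∀ a b, kpow P (a + b) = kpow P a ∘ₖ kpow P b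
  | a, 0 => by
      rw [show kpow P 0 = Kernel.id from rfl, Kernel.comp_id]; rfl
  | a, b + 1 => by
      show kpow P (a+b) ∘ₖ P = kpow P a ∘ₖ kpow P (b+1)
      rw [kpow_add a b, Kernel.comp_assoc]
      rfl

omit [IsMarkovKernel P] in
lemma kpow_inv (μ : Measure Θ) (hinv : μ.bind (fun x => P x) = μ) :
    ∀ n, μ.bind (fun z => kpow P n z) = μ
  | 0 => by
      simp only [kpow, Kernel.id, Kernel.deterministic_apply, id_eq]
      exact Measure.bind_dirac
  | n + 1 => by
      have h1 : ∀ z, kpow P (n+1) z = (P z).bind (fun y => kpow P n y) := by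
        intro z
        rw [show kpow P (n+1) = kpow P n ∘ₖ P from rfl, Kernel.comp_apply]
      simp_rw [h1]
      rw [← Measure.bind_bind P.measurable.aemeasurable (kpow P n).measurable.aemeasurable, hinv,
        kpow_inv μ hinv n]

end auxkernel

section chain
variable {Θ : Type*} [MeasurableSpace Θ] {P : Kernel Θ Θ} [IsMarkovKernel P]

lemma pastMS_le (n : ℕ) : pastMS Θ n ≤ (inferInstance : MeasurableSpace (ℕ → Θ)) :=
  Measurable.comap_le (measurable_pi_lambda _ (fun _ => measurable_pi_apply _))

lemma pastMS_mono {n m : ℕ} (h : n ≤ m) : pastMS Θ n ≤ pastMS Θ m := by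
  have hr : Measurable (fun (v : Fin (m+1) → Θ) => fun i : Fin (n+1) =>
      v (Fin.castLE (by omega) i)) :=
    measurable_pi_lambda _ (fun i => measurable_pi_apply _)
  have hcomp : (fun (ω : ℕ → Θ) => fun i : Fin (n + 1) => ω (i : ℕ)) =
      (fun (v : Fin (m+1) → Θ) => fun i : Fin (n+1) => v (Fin.castLE (by omega) i)) ∘
      (fun ω => fun i : Fin (m + 1) => ω (i : ℕ)) := by
    funext ω i; rfl
  rw [pastMS, hcomp, ← MeasurableSpace.comap_comp]
  exact MeasurableSpace.comap_mono hr.comap_le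

variable {Pr' : Measure (ℕ → Θ)} (hc : IsMarkovChainWithKernel P Pr')

include hc in
/-- One-step conditional law. -/
lemma chain_step (n : ℕ) {B : Set (ℕ → Θ)} (hB : MeasurableSet[pastMS Θ n] B) :
    Measure.map (fun ω => ω (n + 1)) (Pr'.restrict B) =
      (Pr'.restrict B).bind (fun ω => P (ω n)) := by
  have hm : Measurable fun ω : ℕ → Θ => P (ω n) :=
    P.measurable.comp (measurable_pi_apply n)
  ext S hS
  rw [Measure.map_apply (measurable_pi_apply (n+1)) hS,
    Measure.bind_apply hS hm.aemeasurable,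
    Measure.restrict_apply (hS.preimage (measurable_pi_apply (n+1)))]
  exact hc.markov n S hS B hB

include hc in
/-- k-step conditional law. -/
lemma chain_steps (n : ℕ) {B : Set (ℕ → Θ)} (hB : MeasurableSet[pastMS Θ n] B) :
    ∀ k, Measure.map (fun ω => ω (n + k)) (Pr'.restrict B) =
      (Pr'.restrict B).bind (fun ω => kpow P k (ω n)) := by
  intro k
  induction k with
  | zero =>
      have hd : (fun ω : ℕ → Θ => kpow P 0 (ω n)) = fun ω => Measure.dirac (ω n) := by
        funext ω
        rw [show kpow P 0 = Kernel.id from rfl, Kernel.id, Kernel.deterministic_apply]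
        rfl
      rw [hd]
      ext S hS
      have hmd : Measurable fun ω : ℕ → Θ => Measure.dirac (ω n) :=
        Measure.measurable_dirac.comp (measurable_pi_apply n)
      rw [Measure.map_apply (measurable_pi_apply (n+0)) hS,
        Measure.bind_apply hS hmd.aemeasurable]
      have : ∀ ω : ℕ → Θ, Measure.dirac (ω n) S =
          Set.indicator ((fun ω : ℕ → Θ => ω n) ⁻¹' S) 1 ω := by
        intro ω
        rw [Measure.dirac_apply' _ hS]
        rfl
      simp_rw [this]
      rw [lintegral_indicator_one (hS.preimage (measurable_pi_apply n))]
      rfl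
  | succ k ih =>
      have hstep := chain_step hc (n+k) (pastMS_mono (by omega) B hB)
      have h1 : Measure.map (fun ω => ω (n + (k+1))) (Pr'.restrict B) =
          (Pr'.restrict B).bind (fun ω => P (ω (n+k))) := hstep
      rw [h1]
      ext S hS
      have hm1 : Measurable fun ω : ℕ → Θ => P (ω (n+k)) :=
        P.measurable.comp (measurable_pi_apply _)
      have hm2 : Measurable fun ω : ℕ → Θ => kpow P k (ω n) :=
        (kpow P k).measurable.comp (measurable_pi_apply _)
      have hm3 : Measurable fun ω : ℕ → Θ => kpow P (k+1) (ω n) :=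
        (kpow P (k+1)).measurable.comp (measurable_pi_apply _)
      rw [Measure.bind_apply hS hm1.aemeasurable, Measure.bind_apply hS hm3.aemeasurable]
      have h2 : ∫⁻ ω, P (ω (n+k)) S ∂(Pr'.restrict B) =
          ∫⁻ y, P y S ∂(Measure.map (fun ω => ω (n+k)) (Pr'.restrict B)) := by
        rw [lintegral_map (P.measurable_coe hS) (measurable_pi_apply _)]
      rw [h2, ih, Measure.lintegral_bind hm2.aemeasurable (P.measurable_coe hS).aemeasurable]
      congr 1
      funext ω
      rw [← Kernel.comp_apply' P (kpow P k) _ hS, ← kpow_succ']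

include hc in
lemma chain_steps' (n : ℕ) {B : Set (ℕ → Θ)} (hB : MeasurableSet[pastMS Θ n] B)
    (k : ℕ) {S : Set Θ} (hS : MeasurableSet S) :
    Pr' ({ω | ω (n + k) ∈ S} ∩ B) = ∫⁻ ω in B, kpow P k (ω n) S ∂Pr' := by
  have hm : Measurable fun ω : ℕ → Θ => kpow P k (ω n) :=
    (kpow P k).measurable.comp (measurable_pi_apply _)
  have hev : Measurable fun ω : ℕ → Θ => ω (n+k) := measurable_pi_apply _
  have h := congrArg (fun ρ : Measure Θ => ρ S) (chain_steps hc n hB k)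
  rw [Measure.map_apply hev hS, Measure.restrict_apply (hS.preimage hev),
    Measure.bind_apply hS hm.aemeasurable] at h
  exact h

lemma start_lintegral (hp : IsProbabilityMeasure Pr') (x : Θ)
    (hx : Pr' {ω | ω 0 = x} = 1) {g : Θ → ℝ≥0∞} (hg : Measurable g) :
    ∫⁻ ω, g (ω 0) ∂Pr' = g x := by
  have hEm : MeasurableSet {ω : ℕ → Θ | g (ω 0) = g x} :=
    (hg.comp (measurable_pi_apply 0)) (measurableSet_singleton (g x))
  have h1 : Pr' {ω : ℕ → Θ | g (ω 0) = g x} = 1 := by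
    refine le_antisymm prob_le_one ?_
    rw [← hx]
    exact measure_mono (fun ω hω => by simp only [Set.mem_setOf_eq] at hω ⊢; rw [hω])
  have hae : ∀ᵐ ω ∂Pr', g (ω 0) = g x := by
    rw [ae_iff]
    have : {ω : ℕ → Θ | ¬ g (ω 0) = g x} = {ω : ℕ → Θ | g (ω 0) = g x}ᶜ := rfl
    rw [this, prob_compl_eq_zero_iff hEm]
    exact h1
  rw [lintegral_congr_ae hae, lintegral_const, measure_univ, mul_one]

end chain

section contraction
variable {Θ : Type*} [MeasurableSpace Θ]

lemma lintegral_le_of_tv (ν μ' : Measure Θ) [IsProbabilityMeasure ν]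
    [IsProbabilityMeasure μ'] (ε : ℝ≥0∞)
    (hcomp : ∀ S, MeasurableSet S → ν S ≤ μ' S + ε)
    {g : Θ → ℝ≥0∞} (hg : Measurable g) (hg1 : ∀ z, g z ≤ 1) :
    ∫⁻ z, g z ∂ν ≤ (∫⁻ z, g z ∂μ') + ε := by
  set f : Θ → ℝ := fun z => (g z).toReal with hf
  have hfm : Measurable f := ENNReal.measurable_toReal.comp hg
  have hf1 : ∀ z, f z ≤ 1 := by
    intro z
    have := ENNReal.toReal_mono ENNReal.one_ne_top (hg1 z)
    simpa using this
  have hof : ∀ z, ENNReal.ofReal (f z) = g z := fun z =>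
    ENNReal.ofReal_toReal (ne_top_of_le_ne_top ENNReal.one_ne_top (hg1 z))
  have hl : ∀ (ρ : Measure Θ), ∫⁻ z, g z ∂ρ = ∫⁻ t in Set.Ioi (0:ℝ), ρ {a | t < f a} := by
    intro ρ
    rw [← lintegral_eq_lintegral_meas_lt ρ (Filter.Eventually.of_forall fun z =>
      ENNReal.toReal_nonneg) hfm.aemeasurable]
    exact lintegral_congr fun z => (hof z).symm
  have hsplit : ∀ (ρ : Measure Θ), ∫⁻ t in Set.Ioi (0:ℝ), ρ {a | t < f a} =
      ∫⁻ t in Set.Ioc (0:ℝ) 1, ρ {a | t < f a} := by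
    intro ρ
    rw [← Set.Ioc_union_Ioi_eq_Ioi (zero_le_one (α := ℝ)),
      lintegral_union measurableSet_Ioi (Set.Ioc_disjoint_Ioi le_rfl)]
    have hz : ∫⁻ t in Set.Ioi (1:ℝ), ρ {a | t < f a} = 0 := by
      rw [setLIntegral_congr_fun measurableSet_Ioi
        (fun t (ht : t ∈ Set.Ioi (1:ℝ)) => ?_), lintegral_zero]
      have : {a | t < f a} = (∅ : Set Θ) := by
        ext a
        simp only [Set.mem_setOf_eq, Set.mem_empty_iff_false, iff_false, not_lt]
        exact (hf1 a).trans (le_of_lt ht)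
      rw [this]
      simp
    rw [hz, add_zero]
  rw [hl ν, hl μ', hsplit ν, hsplit μ']
  have step1 : ∫⁻ t in Set.Ioc (0:ℝ) 1, ν {a | t < f a} ≤
      ∫⁻ t in Set.Ioc (0:ℝ) 1, (μ' {a | t < f a} + ε) := by
    refine lintegral_mono fun t => ?_
    exact hcomp _ (hfm measurableSet_Ioi)
  refine step1.trans ?_
  rw [lintegral_add_right _ measurable_const, setLIntegral_const]
  have hvol : (volume : Measure ℝ) (Set.Ioc (0:ℝ) 1) = 1 := by
    rw [Real.volume_Ioc]
    norm_num
  rw [hvol, mul_one]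

lemma toReal_prob_le_one {ν : Measure Θ} [IsProbabilityMeasure ν] (S : Set Θ) :
    (ν S).toReal ≤ 1 := by
  have h := ENNReal.toReal_mono ENNReal.one_ne_top (prob_le_one (μ := ν) (s := S))
  simpa using h

lemma tv_bound {ν μ' : Measure Θ} [IsProbabilityMeasure ν] [IsProbabilityMeasure μ']
    {S : Set Θ} (hS : MeasurableSet S) :
    |(ν S).toReal - (μ' S).toReal| ≤ tvDist ν μ' := by
  have hb : BddAbove (Set.range fun T : {T : Set Θ // MeasurableSet T} =>
      |(ν T.1).toReal - (μ' T.1).toReal|) := by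
    refine ⟨2, ?_⟩
    rintro r ⟨T, rfl⟩
    have h1 := toReal_prob_le_one (ν := ν) T.1
    have h2 := toReal_prob_le_one (ν := μ') T.1
    have h3 : (0:ℝ) ≤ (ν T.1).toReal := ENNReal.toReal_nonneg
    have h4 : (0:ℝ) ≤ (μ' T.1).toReal := ENNReal.toReal_nonneg
    rw [abs_le]
    constructor <;> linarith
  exact le_ciSup hb ⟨S, hS⟩

lemma tv_to_ennreal {ν μ' : Measure Θ} [IsProbabilityMeasure ν] [IsProbabilityMeasure μ']
    {ε : ℝ} (hε : 0 ≤ ε) (h : tvDist ν μ' ≤ ε) {S : Set Θ} (hS : MeasurableSet S) :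
    ν S ≤ μ' S + ENNReal.ofReal ε ∧ μ' S ≤ ν S + ENNReal.ofReal ε := by
  have habs := (tv_bound hS).trans h
  rw [abs_sub_le_iff] at habs
  constructor
  · calc ν S = ENNReal.ofReal (ν S).toReal := (ENNReal.ofReal_toReal (measure_ne_top ν S)).symm
    _ ≤ ENNReal.ofReal ((μ' S).toReal + ε) := ENNReal.ofReal_le_ofReal (by linarith [habs.1])
    _ = ENNReal.ofReal (μ' S).toReal + ENNReal.ofReal ε :=
        ENNReal.ofReal_add ENNReal.toReal_nonneg hε
    _ = μ' S + ENNReal.ofReal ε := by rw [ENNReal.ofReal_toReal (measure_ne_top μ' S)]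
  · calc μ' S = ENNReal.ofReal (μ' S).toReal := (ENNReal.ofReal_toReal (measure_ne_top μ' S)).symm
    _ ≤ ENNReal.ofReal ((ν S).toReal + ε) := ENNReal.ofReal_le_ofReal (by linarith [habs.2])
    _ = ENNReal.ofReal (ν S).toReal + ENNReal.ofReal ε :=
        ENNReal.ofReal_add ENNReal.toReal_nonneg hε
    _ = ν S + ENNReal.ofReal ε := by rw [ENNReal.ofReal_toReal (measure_ne_top ν S)]

end contraction

/-- let `(X_t)` be a Markov chain with kernel `P` on `Θ` with stationary
measure `μ_Θ`, `θ = inf{t : X_t ∈ A}` the hitting time of `A`. If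
`Pr_x[θ ≥ t₂] ≤ 1/8` for all starting points `x` and
`‖δ_y P^{t₁} − μ_Θ‖_TV ≤ 1/8` for all `y ∈ A`, then
`‖δ_x P^{t₁+t₂} − μ_Θ‖_TV ≤ 1/4` for all `x`. -/
theorem hitting_time_mixing_bound {Θ : Type*} [MeasurableSpace Θ]
    (P : Kernel Θ Θ) [IsMarkovKernel P]
    (μ : Measure Θ) [IsProbabilityMeasure μ] (hinv : μ.bind (fun x => P x) = μ)
    (A : Set Θ) (hA : MeasurableSet A) (t₁ t₂ : ℕ)
    (Pr : Θ → Measure (ℕ → Θ)) (hprob : ∀ x, IsProbabilityMeasure (Pr x))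
    (hchain : ∀ x, IsMarkovChainWithKernel P (Pr x))
    (hstart : ∀ x, Pr x {ω | ω 0 = x} = 1)
    (hhit : ∀ x, Pr x {ω | ∀ t < t₂, ω t ∉ A} ≤ 1 / 8)
    (hmix : ∀ y ∈ A, tvDist ((kpow P t₁) y) μ ≤ 1 / 8) :
    ∀ x, tvDist ((kpow P (t₁ + t₂)) x) μ ≤ 1 / 4 := by
  classical
  intro x
  haveI := hprob x
  set T := t₁ + t₂ with hT
  set ε8 : ℝ≥0∞ := ENNReal.ofReal (1/8) with hε8def
  have hε8ne : ε8 ≠ ∞ := ENNReal.ofReal_ne_top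
  have hε8eq : ε8 = 1/8 := by
    rw [hε8def, ENNReal.ofReal_div_of_pos (by norm_num)]
    norm_num
  -- per-point bound after hitting A
  have hpoint : ∀ y ∈ A, ∀ m : ℕ, ∀ S : Set Θ, MeasurableSet S →
      kpow P (m + t₁) y S ≤ μ S + ε8 ∧ μ S ≤ kpow P (m + t₁) y S + ε8 := by
    intro y hy m S hS
    have hmixy := hmix y hy
    have hcomp1 : ∀ S', MeasurableSet S' → kpow P t₁ y S' ≤ μ S' + ε8 :=
      fun S' hS' => (tv_to_ennreal (by norm_num) hmixy hS').1
    have hcomp2 : ∀ S', MeasurableSet S' → μ S' ≤ kpow P t₁ y S' + ε8 :=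
      fun S' hS' => (tv_to_ennreal (by norm_num) hmixy hS').2
    have hrep : kpow P (m + t₁) y S = ∫⁻ z, kpow P m z S ∂(kpow P t₁ y) := by
      rw [kpow_add P m t₁, Kernel.comp_apply' _ _ _ hS]
    have hμrep : μ S = ∫⁻ z, kpow P m z S ∂μ := by
      conv_lhs => rw [← kpow_inv P μ hinv m]
      rw [Measure.bind_apply hS (kpow P m).measurable.aemeasurable]
    have hgm : Measurable fun z => kpow P m z S := (kpow P m).measurable_coe hS
    have hg1 : ∀ z, kpow P m z S ≤ 1 := fun z => prob_le_one
    constructor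
    · rw [hrep, hμrep]
      exact lintegral_le_of_tv _ _ _ hcomp1 hgm hg1
    · rw [hrep, hμrep]
      exact lintegral_le_of_tv _ _ _ hcomp2 hgm hg1
  -- hitting-time events
  set Ht : ℕ → Set (ℕ → Θ) := fun t => {ω | ω t ∈ A ∧ ∀ s < t, ω s ∉ A} with hHtdef
  set Einf : Set (ℕ → Θ) := {ω | ∀ s < t₂, ω s ∉ A} with hEinfdef
  have hHtm : ∀ t, MeasurableSet (Ht t) := by
    intro t
    have h1 : MeasurableSet {ω : ℕ → Θ | ω t ∈ A} := (measurable_pi_apply t) hA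
    have h2 : MeasurableSet {ω : ℕ → Θ | ∀ s < t, ω s ∉ A} := by
      have heq : {ω : ℕ → Θ | ∀ s < t, ω s ∉ A} =
          ⋂ (s : ℕ), ⋂ (_ : s < t), (fun ω : ℕ → Θ => ω s) ⁻¹' Aᶜ := by
        ext ω; simp [Set.mem_iInter]
      rw [heq]
      exact MeasurableSet.iInter fun s => MeasurableSet.iInter fun _ =>
        (measurable_pi_apply s) hA.compl
    exact h1.inter h2
  have hEinfm : MeasurableSet Einf := by
    have heq : Einf = ⋂ (s : ℕ), ⋂ (_ : s < t₂), (fun ω : ℕ → Θ => ω s) ⁻¹' Aᶜ := by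
      ext ω; simp [hEinfdef, Set.mem_iInter]
    rw [heq]
    exact MeasurableSet.iInter fun s => MeasurableSet.iInter fun _ =>
      (measurable_pi_apply s) hA.compl
  have hHtpast : ∀ t, MeasurableSet[pastMS Θ t] (Ht t) := by
    intro t
    refine ⟨{v : Fin (t+1) → Θ | v ⟨t, Nat.lt_succ_self t⟩ ∈ A} ∩
      ⋂ (s : Fin (t+1)), ⋂ (_ : (s : ℕ) < t), (fun v : Fin (t+1) → Θ => v s) ⁻¹' Aᶜ,
      ((measurable_pi_apply _) hA).inter (MeasurableSet.iInter fun s =>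
        MeasurableSet.iInter fun _ => (measurable_pi_apply _) hA.compl), ?_⟩
    ext ω
    simp only [Set.mem_preimage, Set.mem_inter_iff, Set.mem_setOf_eq, Set.mem_iInter,
      Set.mem_compl_iff, hHtdef]
    constructor
    · rintro ⟨h1, h2⟩
      exact ⟨h1, fun s hs => h2 ⟨s, by omega⟩ hs⟩
    · rintro ⟨h1, h2⟩
      exact ⟨h1, fun s hs => h2 (s : ℕ) hs⟩
  -- partition of trajectory space
  have hpart : ∀ W : Set (ℕ → Θ), MeasurableSet W →
      Pr x W = ∑ t ∈ Finset.range t₂, Pr x (W ∩ Ht t) + Pr x (W ∩ Einf) := by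
    intro W hW
    have hdis : (↑(Finset.range t₂) : Set ℕ).PairwiseDisjoint (fun t => W ∩ Ht t) := by
      intro a _ b _ hab
      refine Set.disjoint_left.mpr fun ω hωa hωb => ?_
      rcases lt_or_gt_of_ne hab with h | h
      · exact hωb.2.2 a h hωa.2.1
      · exact hωa.2.2 b h hωb.2.1
    have hUn : W ∩ Einfᶜ = ⋃ t ∈ Finset.range t₂, (W ∩ Ht t) := by
      ext ω
      simp only [Set.mem_inter_iff, Set.mem_compl_iff, Set.mem_iUnion, Finset.mem_range,
        Set.mem_setOf_eq, hEinfdef, hHtdef]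
      constructor
      · rintro ⟨hωW, hωE⟩
        push_neg at hωE
        obtain ⟨s₀, hs₀lt, hs₀A⟩ := hωE
        have hex : ∃ s, ω s ∈ A := ⟨s₀, hs₀A⟩
        refine ⟨Nat.find hex, lt_of_le_of_lt (Nat.find_min' hex hs₀A) hs₀lt,
          hωW, Nat.find_spec hex, fun s hs => Nat.find_min hex hs⟩
      · rintro ⟨t, htlt, hωW, hωA, hmin⟩
        exact ⟨hωW, fun hall => hall t htlt hωA⟩
    calc Pr x W = Pr x (W ∩ Einf) + Pr x (W \ Einf) :=
          (measure_inter_add_diff W hEinfm).symm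
    _ = Pr x (W ∩ Einf) + Pr x (⋃ t ∈ Finset.range t₂, (W ∩ Ht t)) := by
          rw [Set.diff_eq, hUn]
    _ = Pr x (W ∩ Einf) + ∑ t ∈ Finset.range t₂, Pr x (W ∩ Ht t) := by
          rw [measure_biUnion_finset hdis (fun t _ => hW.inter (hHtm t))]
    _ = _ := add_comm _ _
  have hsum1 : ∑ t ∈ Finset.range t₂, Pr x (Ht t) + Pr x Einf = 1 := by
    have h := hpart Set.univ MeasurableSet.univ
    simp only [Set.univ_inter, measure_univ] at h
    exact h.symm
  have hsumle : ∑ t ∈ Finset.range t₂, Pr x (Ht t) ≤ 1 := by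
    rw [← hsum1]; exact le_self_add
  have hhit' : Pr x Einf ≤ ε8 := by
    rw [hε8eq]; exact hhit x
  -- the key per-set bound
  have key : ∀ S : Set Θ, MeasurableSet S →
      |((kpow P T) x S).toReal - (μ S).toReal| ≤ 1/4 := by
    intro S hS
    set W : Set (ℕ → Θ) := {ω | ω T ∈ S} with hWdef
    have hWm : MeasurableSet W := (measurable_pi_apply T) hS
    have hlaw : Pr x W = kpow P T x S := by
      have h := chain_steps' (hchain x) 0 (MeasurableSet.univ) T hS
      simp only [Set.inter_univ, Measure.restrict_univ, Nat.zero_add] at h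
      rw [h]
      exact start_lintegral (hprob x) x (hstart x) ((kpow P T).measurable_coe hS)
    have hterm : ∀ t ∈ Finset.range t₂,
        Pr x (W ∩ Ht t) = ∫⁻ ω in Ht t, kpow P ((t₂ - t) + t₁) (ω t) S ∂Pr x := by
      intro t ht
      rw [Finset.mem_range] at ht
      have hk : t + ((t₂ - t) + t₁) = T := by omega
      have h := chain_steps' (hchain x) t (hHtpast t) ((t₂ - t) + t₁) hS
      rw [hk] at h
      exact h
    have hub : kpow P T x S ≤ μ S + (ε8 + ε8) := by
      rw [← hlaw, hpart W hWm]
      have h1 : ∀ t ∈ Finset.range t₂, Pr x (W ∩ Ht t) ≤ Pr x (Ht t) * (μ S + ε8) := by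
        intro t ht
        rw [hterm t ht]
        calc ∫⁻ ω in Ht t, kpow P ((t₂ - t) + t₁) (ω t) S ∂Pr x
            ≤ ∫⁻ _ in Ht t, (μ S + ε8) ∂Pr x :=
              setLIntegral_mono measurable_const
                (fun ω hω => (hpoint (ω t) hω.1 _ S hS).1)
        _ = (μ S + ε8) * Pr x (Ht t) := setLIntegral_const _ _
        _ = Pr x (Ht t) * (μ S + ε8) := mul_comm _ _
      calc ∑ t ∈ Finset.range t₂, Pr x (W ∩ Ht t) + Pr x (W ∩ Einf)
          ≤ ∑ t ∈ Finset.range t₂, Pr x (Ht t) * (μ S + ε8) + Pr x Einf :=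
            add_le_add (Finset.sum_le_sum h1) (measure_mono Set.inter_subset_right)
      _ = (∑ t ∈ Finset.range t₂, Pr x (Ht t)) * (μ S + ε8) + Pr x Einf := by
            rw [Finset.sum_mul]
      _ ≤ 1 * (μ S + ε8) + ε8 := add_le_add (mul_le_mul_left hsumle _) hhit'
      _ = μ S + (ε8 + ε8) := by rw [one_mul, add_assoc]
    have hlb : μ S ≤ kpow P T x S + (ε8 + ε8) := by
      have h0 : μ S = ∑ t ∈ Finset.range t₂, Pr x (Ht t) * μ S + Pr x Einf * μ S := by
        rw [← Finset.sum_mul, ← add_mul, hsum1, one_mul]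
      have h1 : ∀ t ∈ Finset.range t₂,
          Pr x (Ht t) * μ S ≤ Pr x (W ∩ Ht t) + ε8 * Pr x (Ht t) := by
        intro t ht
        rw [hterm t ht]
        calc Pr x (Ht t) * μ S = μ S * Pr x (Ht t) := mul_comm _ _
        _ = ∫⁻ _ in Ht t, μ S ∂Pr x := (setLIntegral_const _ _).symm
        _ ≤ ∫⁻ ω in Ht t, (kpow P ((t₂ - t) + t₁) (ω t) S + ε8) ∂Pr x :=
              setLIntegral_mono
                (((kpow P _).measurable_coe hS).comp (measurable_pi_apply t) |>.add
                  measurable_const)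
                (fun ω hω => (hpoint (ω t) hω.1 _ S hS).2)
        _ = ∫⁻ ω in Ht t, kpow P ((t₂ - t) + t₁) (ω t) S ∂Pr x + ε8 * Pr x (Ht t) := by
              rw [lintegral_add_right _ measurable_const, setLIntegral_const]
      have h2 : ∑ t ∈ Finset.range t₂, Pr x (W ∩ Ht t) ≤ kpow P T x S := by
        rw [← hlaw, hpart W hWm]
        exact le_self_add
      calc μ S = ∑ t ∈ Finset.range t₂, Pr x (Ht t) * μ S + Pr x Einf * μ S := h0
      _ ≤ ∑ t ∈ Finset.range t₂, (Pr x (W ∩ Ht t) + ε8 * Pr x (Ht t)) + ε8 * 1 := by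
            refine add_le_add (Finset.sum_le_sum h1) ?_
            exact mul_le_mul' hhit' prob_le_one
      _ = ∑ t ∈ Finset.range t₂, Pr x (W ∩ Ht t) +
            ε8 * (∑ t ∈ Finset.range t₂, Pr x (Ht t)) + ε8 := by
            rw [Finset.sum_add_distrib, ← Finset.mul_sum, mul_one]
      _ ≤ kpow P T x S + ε8 * 1 + ε8 :=
            add_le_add (add_le_add h2 (mul_le_mul_right hsumle _)) le_rfl
      _ = kpow P T x S + (ε8 + ε8) := by rw [mul_one, add_assoc]
    -- convert to reals
    have hεtr : (ε8 + ε8).toReal = 1/4 := by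
      rw [ENNReal.toReal_add hε8ne hε8ne, hε8def, ENNReal.toReal_ofReal (by norm_num)]
      norm_num
    have hfin1 : μ S + (ε8 + ε8) ≠ ∞ :=
      ENNReal.add_ne_top.mpr ⟨measure_ne_top _ _, ENNReal.add_ne_top.mpr ⟨hε8ne, hε8ne⟩⟩
    have hfin2 : kpow P T x S + (ε8 + ε8) ≠ ∞ :=
      ENNReal.add_ne_top.mpr ⟨measure_ne_top _ _, ENNReal.add_ne_top.mpr ⟨hε8ne, hε8ne⟩⟩
    rw [abs_sub_le_iff]
    constructor
    · have h := ENNReal.toReal_mono hfin1 hub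
      rw [ENNReal.toReal_add (measure_ne_top _ _)
        (ENNReal.add_ne_top.mpr ⟨hε8ne, hε8ne⟩), hεtr] at h
      linarith
    · have h := ENNReal.toReal_mono hfin2 hlb
      rw [ENNReal.toReal_add (measure_ne_top _ _)
        (ENNReal.add_ne_top.mpr ⟨hε8ne, hε8ne⟩), hεtr] at h
      linarith
  haveI : Nonempty {A : Set Θ // MeasurableSet A} := ⟨⟨∅, MeasurableSet.empty⟩⟩
  exact ciSup_le fun ⟨S, hS⟩ => key S hS
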